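/- Let A be an associative unital K-algebra with a double Poisson bracket ⦃-,-⦄ and set {x,y} := m(⦃x,y⦄). Then for each x ∈ A the map {x,−} : A → A is a K-linear derivation of A (in particular {x,1} = 0), and the bracket satisfies the left Leibniz (Loday) identity {x,{y,z}} = {{x,y},z} + {y,{x,z}} for all x, y, z ∈ A; that is, (A, {−,−}) is a Loday (left Leibniz) algebra over K. -/

import Mathlib

open TensorProduct

noncomputable section

universe u v w

/-- The cyclic permutation `ρ : A⊗A⊗A → A⊗A⊗A`, `(x⊗y)⊗z ↦ (z⊗x)⊗y`. -/
def cyc (K : Type u) [Field K] (A : Type v) [Ring A] [Algebra K A] :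
    ((A ⊗[K] A) ⊗[K] A) →ₗ[K] ((A ⊗[K] A) ⊗[K] A) :=
  ((TensorProduct.assoc K A A A).symm.toLinearMap).comp
    ((TensorProduct.comm K (A ⊗[K] A) A).toLinearMap)

/-- A double bracket on the `K`-algebra `A`: a `K`-bilinear map `A × A → A ⊗ A` which is
antisymmetric with respect to the flip and satisfies the Leibniz rule in its second
argument for the outer bimodule structure on `A ⊗ A`. -/
structure DoubleBracket (K : Type u) (A : Type v) [Field K] [Ring A] [Algebra K A] where
  br : A →ₗ[K] A →ₗ[K] A ⊗[K] A
  antisymm : ∀ x y : A, br y x = - (TensorProduct.comm K A A) (br x y)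
  leibniz : ∀ x a b : A, br x (a * b)
      = (TensorProduct.map (LinearMap.mulLeft K a) (LinearMap.id : A →ₗ[K] A)) (br x b)
        + (TensorProduct.map (LinearMap.id : A →ₗ[K] A) (LinearMap.mulRight K b)) (br x a)

/-- The double Jacobi identity: a double bracket is a double Poisson bracket iff it holds. -/
def DoubleBracket.IsPoisson {K : Type u} {A : Type v} [Field K] [Ring A] [Algebra K A]
    (D : DoubleBracket K A) : Prop :=
  ∀ x y z : A,
    (LinearMap.rTensor A (D.br x)) (D.br y z)
      + cyc K A ((LinearMap.rTensor A (D.br y)) (D.br z x))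
      + cyc K A (cyc K A ((LinearMap.rTensor A (D.br z)) (D.br x y))) = 0

/-- The associated bracket `{x,y} = m(⦃x,y⦄)`. -/
def DoubleBracket.ab {K : Type u} {A : Type v} [Field K] [Ring A] [Algebra K A]
    (D : DoubleBracket K A) (x y : A) : A :=
  LinearMap.mul' K A (D.br x y)

/-- `[A,A]`: the `K`-linear span of all commutators. -/
def commSpan (K : Type u) [Field K] (A : Type v) [Ring A] [Algebra K A] : Submodule K A :=
  Submodule.span K {z : A | ∃ u v : A, z = u * v - v * u}

/-- `K·1 + [A,A]`. -/
def natSub (K : Type u) [Field K] (A : Type v) [Ring A] [Algebra K A] : Submodule K A :=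
  Submodule.span K {(1 : A)} ⊔ commSpan K A

/-! ### Auxiliary lemmas -/

namespace S2Aux

variable {K : Type u} [Field K] {A : Type v} [Ring A] [Algebra K A]

/-- Multiplication of all three tensor factors: `(u⊗v)⊗w ↦ uvw`. -/
def Phi (K : Type u) [Field K] (A : Type v) [Ring A] [Algebra K A] :
    (A ⊗[K] A) ⊗[K] A →ₗ[K] A :=
  (LinearMap.mul' K A).comp (LinearMap.rTensor A (LinearMap.mul' K A))

lemma cyc_tmul (a b c : A) : cyc K A ((a ⊗ₜ[K] b) ⊗ₜ[K] c) = (c ⊗ₜ[K] a) ⊗ₜ[K] b := by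
  simp [cyc, TensorProduct.comm_tmul, TensorProduct.assoc_symm_tmul]

lemma phi_tmul (s : A ⊗[K] A) (q : A) :
    Phi K A (s ⊗ₜ[K] q) = LinearMap.mul' K A s * q := by
  simp [Phi, LinearMap.rTensor_tmul, LinearMap.mul'_apply]

lemma phi_cyc_tmul (s : A ⊗[K] A) (q : A) :
    Phi K A (cyc K A (s ⊗ₜ[K] q)) = q * LinearMap.mul' K A s := by
  induction s using TensorProduct.induction_on with
  | zero => simp [zero_tmul]
  | tmul a b => rw [cyc_tmul, phi_tmul]; simp [LinearMap.mul'_apply, mul_assoc]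
  | add s t hs ht => simp [add_tmul, map_add, hs, ht, mul_add]

lemma phi_cyc2_tmul (s : A ⊗[K] A) (q : A) :
    Phi K A (cyc K A (cyc K A (s ⊗ₜ[K] q)))
      = LinearMap.mul' K A ((TensorProduct.comm K A A)
          ((TensorProduct.map (LinearMap.id : A →ₗ[K] A) (LinearMap.mulRight K q)) s)) := by
  induction s using TensorProduct.induction_on with
  | zero => simp [zero_tmul]
  | tmul a b =>
      rw [cyc_tmul, cyc_tmul, phi_tmul]
      simp [LinearMap.mul'_apply, TensorProduct.comm_tmul, mul_assoc]
  | add s t hs ht => simp [add_tmul, map_add, hs, ht]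

lemma swap_sides (u : A) (s : A ⊗[K] A) :
    LinearMap.mul' K A ((TensorProduct.comm K A A)
        ((TensorProduct.map (LinearMap.id : A →ₗ[K] A) (LinearMap.mulRight K u)) s))
      = LinearMap.mul' K A ((TensorProduct.comm K A A)
        ((TensorProduct.map (LinearMap.mulLeft K u) (LinearMap.id : A →ₗ[K] A)) s)) := by
  induction s using TensorProduct.induction_on with
  | zero => simp
  | tmul a b => simp [TensorProduct.comm_tmul, LinearMap.mul'_apply, mul_assoc]
  | add s t hs ht => simp [map_add, hs, ht]

lemma comm_map_comm (g : A →ₗ[K] A) (s : A ⊗[K] A) :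
    (TensorProduct.comm K A A) ((TensorProduct.map g (LinearMap.id : A →ₗ[K] A))
        ((TensorProduct.comm K A A) s))
      = (TensorProduct.map (LinearMap.id : A →ₗ[K] A) g) s := by
  induction s using TensorProduct.induction_on with
  | zero => simp
  | tmul a b => simp [TensorProduct.comm_tmul]
  | add s t hs ht => simp [map_add, hs, ht]

lemma mul_map_left (a : A) (s : A ⊗[K] A) :
    LinearMap.mul' K A ((TensorProduct.map (LinearMap.mulLeft K a)
        (LinearMap.id : A →ₗ[K] A)) s) = a * LinearMap.mul' K A s := by
  induction s using TensorProduct.induction_on with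
  | zero => simp
  | tmul p q => simp [LinearMap.mul'_apply, mul_assoc]
  | add s t hs ht => simp [map_add, hs, ht, mul_add]

lemma mul_map_right (b : A) (s : A ⊗[K] A) :
    LinearMap.mul' K A ((TensorProduct.map (LinearMap.id : A →ₗ[K] A)
        (LinearMap.mulRight K b)) s) = LinearMap.mul' K A s * b := by
  induction s using TensorProduct.induction_on with
  | zero => simp
  | tmul p q => simp [LinearMap.mul'_apply, mul_assoc]
  | add s t hs ht => simp [map_add, hs, ht, add_mul]

lemma ab_deriv (D : DoubleBracket K A) (x a b : A) :
    D.ab x (a * b) = D.ab x a * b + a * D.ab x b := by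
  unfold DoubleBracket.ab
  rw [D.leibniz, map_add, mul_map_left, mul_map_right]
  exact add_comm _ _

lemma br_one (D : DoubleBracket K A) (x : A) : D.br x 1 = 0 := by
  have h := D.leibniz x 1 1
  simp only [mul_one, LinearMap.mulLeft_one, LinearMap.mulRight_one,
    TensorProduct.map_id, LinearMap.id_coe, id_eq] at h
  exact left_eq_add.mp h

lemma ab_add_left (D : DoubleBracket K A) (a b z : A) :
    D.ab (a + b) z = D.ab a z + D.ab b z := by
  simp [DoubleBracket.ab, map_add, LinearMap.add_apply]

lemma ab_add_right (D : DoubleBracket K A) (x a b : A) :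
    D.ab x (a + b) = D.ab x a + D.ab x b := by
  simp [DoubleBracket.ab, map_add]

/-- Leibniz for the associated bracket, in tensor form. -/
lemma mul_rl (D : DoubleBracket K A) (x : A) (t : A ⊗[K] A) :
    LinearMap.mul' K A ((TensorProduct.map ((LinearMap.mul' K A).comp (D.br x))
        (LinearMap.id : A →ₗ[K] A)) t)
      + LinearMap.mul' K A ((TensorProduct.map (LinearMap.id : A →ₗ[K] A)
        ((LinearMap.mul' K A).comp (D.br x))) t)
      = D.ab x (LinearMap.mul' K A t) := by
  induction t using TensorProduct.induction_on with
  | zero => simp [DoubleBracket.ab]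
  | tmul p q =>
      simp only [TensorProduct.map_tmul, LinearMap.mul'_apply, LinearMap.comp_apply,
        LinearMap.id_coe, id_eq]
      rw [ab_deriv D x p q]
      rfl
  | add s t hs ht =>
      simp only [map_add]
      rw [ab_add_right, ← hs, ← ht]; abel

lemma phi_rTensor (f : A →ₗ[K] A ⊗[K] A) (t : A ⊗[K] A) :
    Phi K A (LinearMap.rTensor A f t)
      = LinearMap.mul' K A ((TensorProduct.map ((LinearMap.mul' K A).comp f)
          (LinearMap.id : A →ₗ[K] A)) t) := by
  induction t using TensorProduct.induction_on with
  | zero => simp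
  | tmul p q =>
      rw [LinearMap.rTensor_tmul, phi_tmul]
      simp [LinearMap.mul'_apply]
  | add s t hs ht => simp [map_add, hs, ht]

lemma phi_cyc_rTensor (f : A →ₗ[K] A ⊗[K] A) (t : A ⊗[K] A) :
    Phi K A (cyc K A (LinearMap.rTensor A f t))
      = LinearMap.mul' K A ((TensorProduct.comm K A A)
          ((TensorProduct.map ((LinearMap.mul' K A).comp f)
            (LinearMap.id : A →ₗ[K] A)) t)) := by
  induction t using TensorProduct.induction_on with
  | zero => simp
  | tmul p q =>
      rw [LinearMap.rTensor_tmul, phi_cyc_tmul]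
      simp [LinearMap.mul'_apply, TensorProduct.comm_tmul]
  | add s t hs ht => simp [map_add, hs, ht]

lemma key_pure (D : DoubleBracket K A) (z u v : A) :
    Phi K A (cyc K A (cyc K A (LinearMap.rTensor A (D.br z) (u ⊗ₜ[K] v))))
      + Phi K A (cyc K A (cyc K A (LinearMap.rTensor A (D.br z) (v ⊗ₜ[K] u))))
      = - D.ab (u * v) z := by
  rw [LinearMap.rTensor_tmul, LinearMap.rTensor_tmul, phi_cyc2_tmul, phi_cyc2_tmul,
    swap_sides u (D.br z v)]
  simp only [DoubleBracket.ab, D.antisymm z (u * v), D.leibniz z u v, map_add, map_neg,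
    neg_neg]
  exact add_comm _ _

lemma key (D : DoubleBracket K A) (z : A) (t : A ⊗[K] A) :
    Phi K A (cyc K A (cyc K A (LinearMap.rTensor A (D.br z) t)))
      + Phi K A (cyc K A (cyc K A (LinearMap.rTensor A (D.br z)
          ((TensorProduct.comm K A A) t))))
      = - D.ab (LinearMap.mul' K A t) z := by
  induction t using TensorProduct.induction_on with
  | zero => simp [DoubleBracket.ab]
  | tmul u v =>
      rw [TensorProduct.comm_tmul, LinearMap.mul'_apply]
      exact key_pure D z u v
  | add s t hs ht =>
      simp only [map_add]
      rw [ab_add_left]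
      rw [neg_add, ← hs, ← ht]; abel

end S2Aux

/-- For a double Poisson bracket on `A`, each `{x,−} = m∘⦃x,−⦄` is a
`K`-linear derivation of `A` (in particular `{x,1} = 0`), and the bracket satisfies the
left Leibniz (Loday) identity `{x,{y,z}} = {{x,y},z} + {y,{x,z}}`; that is,
`(A, {−,−})` is a Loday (left Leibniz) algebra over `K`. -/
theorem statement_2 (K : Type u) [Field K] [CharZero K] (A : Type v) [Ring A] [Algebra K A]
    (D : DoubleBracket K A) (hD : D.IsPoisson) :
    (∀ (x : A) (c : K) (a b : A), D.ab x (c • a + b) = c • D.ab x a + D.ab x b)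
    ∧ (∀ x a b : A, D.ab x (a * b) = D.ab x a * b + a * D.ab x b)
    ∧ (∀ x : A, D.ab x 1 = 0)
    ∧ (∀ x y z : A, D.ab x (D.ab y z) = D.ab (D.ab x y) z + D.ab y (D.ab x z)) := by
  open S2Aux in
  refine ⟨?_, S2Aux.ab_deriv D, ?_, ?_⟩
  · intro x c a b
    simp [DoubleBracket.ab, map_add, map_smul]
  · intro x
    simp [DoubleBracket.ab, S2Aux.br_one D x]
  · intro x y z
    set μ := LinearMap.mul' K A with hμ
    -- apply Phi to the two Jacobi identities
    have eA := congrArg (S2Aux.Phi K A) (hD x y z)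
    have eB := congrArg (S2Aux.Phi K A) (hD y x z)
    simp only [map_add, map_zero] at eA eB
    -- names for the six building blocks
    set P1 := μ ((TensorProduct.map (μ.comp (D.br x)) (LinearMap.id : A →ₗ[K] A)) (D.br y z)) with hP1
    set P2 := μ ((TensorProduct.map (LinearMap.id : A →ₗ[K] A) (μ.comp (D.br x))) (D.br y z)) with hP2
    set Q1 := μ ((TensorProduct.map (μ.comp (D.br y)) (LinearMap.id : A →ₗ[K] A)) (D.br x z)) with hQ1
    set Q2 := μ ((TensorProduct.map (LinearMap.id : A →ₗ[K] A) (μ.comp (D.br y))) (D.br x z)) with hQ2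
    set R := S2Aux.Phi K A (cyc K A (cyc K A (LinearMap.rTensor A (D.br z) (D.br x y)))) with hR
    set R' := S2Aux.Phi K A (cyc K A (cyc K A (LinearMap.rTensor A (D.br z)
        ((TensorProduct.comm K A A) (D.br x y))))) with hR'
    -- rewrite eA
    have t1A : S2Aux.Phi K A (LinearMap.rTensor A (D.br x) (D.br y z)) = P1 :=
      S2Aux.phi_rTensor (D.br x) (D.br y z)
    have t2A : S2Aux.Phi K A (cyc K A (LinearMap.rTensor A (D.br y) (D.br z x))) = -Q2 := by
      rw [S2Aux.phi_cyc_rTensor, D.antisymm x z]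
      simp only [map_neg]
      rw [S2Aux.comm_map_comm]
    have hA : P1 + -Q2 + R = 0 := by rw [← t1A, ← t2A]; exact eA
    -- rewrite eB
    have t1B : S2Aux.Phi K A (LinearMap.rTensor A (D.br y) (D.br x z)) = Q1 :=
      S2Aux.phi_rTensor (D.br y) (D.br x z)
    have t2B : S2Aux.Phi K A (cyc K A (LinearMap.rTensor A (D.br x) (D.br z y))) = -P2 := by
      rw [S2Aux.phi_cyc_rTensor, D.antisymm y z]
      simp only [map_neg]
      rw [S2Aux.comm_map_comm]
    have t3B : S2Aux.Phi K A (cyc K A (cyc K A (LinearMap.rTensor A (D.br z) (D.br y x))))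
        = -R' := by
      rw [D.antisymm x y]
      simp only [map_neg]
      rfl
    have hB : Q1 + -P2 + -R' = 0 := by rw [← t1B, ← t2B, ← t3B]; exact eB
    -- the three bracket identities
    have hx : P1 + P2 = D.ab x (D.ab y z) := S2Aux.mul_rl D x (D.br y z)
    have hy : Q1 + Q2 = D.ab y (D.ab x z) := S2Aux.mul_rl D y (D.br x z)
    have hK : R + R' = - D.ab (D.ab x y) z := S2Aux.key D z (D.br x y)
    have hK' : D.ab (D.ab x y) z = -(R + R') := by rw [hK, neg_neg]
    have hsum : P1 + P2 + R + R' - Q1 - Q2 = 0 := by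
      rw [show P1 + P2 + R + R' - Q1 - Q2 = (P1 + -Q2 + R) - (Q1 + -P2 + -R') from by abel,
        hA, hB, sub_zero]
    rw [← hx, ← hy, hK', ← sub_eq_zero,
      show P1 + P2 - (-(R + R') + (Q1 + Q2)) = P1 + P2 + R + R' - Q1 - Q2 from by abel]
    exact hsum
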